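/- The equality M_*(μ) = max{A_*^{(j)}(μ) : j ∈ Λ} can fail for non-ergodic invariant measures: for M_1 = diag(1,2), M_2 = diag(3,2) on the full 2-shift, with μ = p·δ_{1^∞} + (1−p)·δ_{2^∞}, 0 < p < 1, one has M_*(μ) = p log 2 + (1−p) log 3, while A_*^{(1)}(μ) = (1−p) log 3 and A_*^{(2)}(μ) = log 2, so M_*(μ) > max{A_*^{(1)}(μ), A_*^{(2)}(μ)}. -/

import Mathlib

open MeasureTheory Filter
open scoped ENNReal Matrix.Norms.L2Operator NNReal

/-- `log` with the convention `log x = -∞` for `x ≤ 0`. -/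
noncomputable def elog (x : ℝ) : EReal := ENNReal.log (ENNReal.ofReal x)

/-- The shift map on the one-sided full shift `Σ = {1,…,ℓ}^ℕ`. -/
def shift (ℓ : ℕ) : (ℕ → Fin ℓ) → (ℕ → Fin ℓ) := fun x i => x (i + 1)

/-- The cylinder set `[J]` of a word `J` of length `n`. -/
def cyl {ℓ n : ℕ} (J : Fin n → Fin ℓ) : Set (ℕ → Fin ℓ) := {x | ∀ i : Fin n, x i = J i}

/-- The product `N_J = N_{j_1} ⋯ N_{j_n}` for a word `J`. -/
noncomputable def wordProd {𝕜 : Type*} [RCLike 𝕜] {ℓ : ℕ} {m : Type*} [Fintype m] [DecidableEq m]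
    (N : Fin ℓ → Matrix m m 𝕜) {n : ℕ} (J : Fin n → Fin ℓ) : Matrix m m 𝕜 :=
  (List.ofFn fun i => N (J i)).prod

/-- The sequence whose limit is the Lyapunov exponent
`N_*(μ) = lim (1/n) ∑_{J ∈ Σ_n} μ([J]) log ‖N_J‖ ∈ ℝ ∪ {-∞}`. -/
noncomputable def lyapSeq {𝕜 : Type*} [RCLike 𝕜] {ℓ : ℕ} {m : Type*} [Fintype m]
    [DecidableEq m] (N : Fin ℓ → Matrix m m 𝕜) (μ : Measure (ℕ → Fin ℓ)) (n : ℕ) :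
    EReal :=
  (((n : ℝ)⁻¹ : ℝ) : EReal) *
    ∑ J : Fin n → Fin ℓ, (((μ (cyl J)).toReal : ℝ) : EReal) * elog ‖wordProd N J‖

/-- The sequence whose limit is the entropy of `μ` for the full shift:
`h(μ) = lim -(1/n) ∑_{J ∈ Σ_n} μ([J]) log μ([J])`. -/
noncomputable def entSeq {ℓ : ℕ} (μ : Measure (ℕ → Fin ℓ)) (n : ℕ) : ℝ :=
  (n : ℝ)⁻¹ * -∑ J : Fin n → Fin ℓ, (μ (cyl J)).toReal * Real.log (μ (cyl J)).toReal

/-- The sequence whose limit is the pressure `P(q) = lim (1/n) log ∑_{J} ‖N_J‖^q`. -/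
noncomputable def pressSeq {𝕜 : Type*} [RCLike 𝕜] {ℓ : ℕ} {m : Type*} [Fintype m]
    [DecidableEq m] (N : Fin ℓ → Matrix m m 𝕜) (q : ℝ) (n : ℕ) : EReal :=
  (((n : ℝ)⁻¹ : ℝ) : EReal) * elog (∑ J : Fin n → Fin ℓ, ‖wordProd N J‖ ^ q)

/-- A `q`-equilibrium state of a pressure value `p`: a shift-invariant Borel
probability measure `μ` with `p = q N_*(μ) + h(μ)`. -/
def IsEquilibriumState {𝕜 : Type*} [RCLike 𝕜] {ℓ : ℕ} {m : Type*} [Fintype m]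
    [DecidableEq m] (N : Fin ℓ → Matrix m m 𝕜) (q p : ℝ)
    (μ : Measure (ℕ → Fin ℓ)) : Prop :=
  IsProbabilityMeasure μ ∧ MeasurePreserving (shift ℓ) μ μ ∧
    ∃ (L : EReal) (h : ℝ), Tendsto (lyapSeq N μ) atTop (nhds L) ∧
      Tendsto (entSeq μ) atTop (nhds h) ∧
      (p : EReal) = ((q : ℝ) : EReal) * L + ((h : ℝ) : EReal)

/-- A family of square matrices over `𝕜` is irreducible if no nonzero proper linear
subspace is invariant under all of the matrices. -/
def IsIrreducibleFamily {𝕜 : Type*} [RCLike 𝕜] {n : Type*} [Fintype n] {ι : Type*}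
    (M : ι → Matrix n n 𝕜) : Prop :=
  ¬ ∃ V : Submodule 𝕜 (n → 𝕜), V ≠ ⊥ ∧ V ≠ ⊤ ∧ ∀ i, ∀ v ∈ V, (M i).mulVec v ∈ V

/-- The `(j,j)` diagonal block of `T⁻¹ M T` for the block structure given by `b`. -/
noncomputable def diagBlock {𝕜 : Type*} [RCLike 𝕜] {d t : ℕ} (b : Fin d → Fin t)
    (N : Matrix (Fin d) (Fin d) 𝕜) (j : Fin t) :
    Matrix {x : Fin d // b x = j} {x : Fin d // b x = j} 𝕜 :=
  Matrix.of fun a c => N a.1 c.1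

-- helpers
lemma elog_pos {x : ℝ} (hx : 0 < x) : elog x = (Real.log x : EReal) :=
  ENNReal.log_ofReal_of_pos hx

lemma measurableSet_cyl {ℓ n : ℕ} (J : Fin n → Fin ℓ) : MeasurableSet (cyl J) := by
  have : cyl J = ⋂ i : Fin n, (fun x : ℕ → Fin ℓ => x (i : ℕ)) ⁻¹' {J i} := by
    ext x; simp [cyl, Set.mem_iInter]
  rw [this]
  exact MeasurableSet.iInter fun i => measurable_pi_apply (i : ℕ) (measurableSet_singleton (J i))

lemma mem_cyl_const {ℓ n : ℕ} (a : Fin ℓ) (J : Fin n → Fin ℓ) :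
    ((fun _ => a) : ℕ → Fin ℓ) ∈ cyl J ↔ J = fun _ => a := by
  simp only [cyl, Set.mem_setOf_eq, funext_iff]
  constructor <;> intro h i <;> exact (h i).symm

lemma wordProd_const {𝕜 : Type*} [RCLike 𝕜] {ℓ : ℕ} {m : Type*} [Fintype m] [DecidableEq m]
    (N : Fin ℓ → Matrix m m 𝕜) (n : ℕ) (a : Fin ℓ) :
    wordProd N (fun _ : Fin n => a) = N a ^ n := by
  simp [wordProd, List.ofFn_const, List.prod_replicate]

-- diagonal norms
set_option maxHeartbeats 1000000 in
lemma l2_norm_diagonal_le {ι : Type*} [Fintype ι] [DecidableEq ι] (v : ι → ℝ) {C : ℝ}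
    (hC : 0 ≤ C) (h : ∀ i, |v i| ≤ C) : ‖Matrix.diagonal v‖ ≤ C := by
  rw [Matrix.l2_opNorm_def]
  refine ContinuousLinearMap.opNorm_le_bound _ hC fun x => ?_
  have hx : ∀ i, ((Matrix.toEuclideanLin.trans LinearMap.toContinuousLinearMap)
      (Matrix.diagonal v)) x i = v i * x i := by
    intro i
    show (Matrix.diagonal v).mulVec (fun j => x j) i = _
    simp [Matrix.mulVec_diagonal]
  rw [EuclideanSpace.norm_eq, EuclideanSpace.norm_eq]
  have step : ∑ i, ‖((Matrix.toEuclideanLin.trans LinearMap.toContinuousLinearMap)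
      (Matrix.diagonal v)) x i‖ ^ 2 ≤ C ^ 2 * ∑ i, ‖x i‖ ^ 2 := by
    rw [Finset.mul_sum]
    refine Finset.sum_le_sum fun i _ => ?_
    rw [hx i, norm_mul, mul_pow]
    refine mul_le_mul_of_nonneg_right ?_ (sq_nonneg _)
    refine pow_le_pow_left₀ (norm_nonneg _) ?_ 2
    rw [Real.norm_eq_abs]; exact h i
  refine le_trans (Real.sqrt_le_sqrt step) ?_
  rw [Real.sqrt_mul (sq_nonneg C), Real.sqrt_sq hC]

lemma l2_norm_diagonal_ge {ι : Type*} [Fintype ι] [DecidableEq ι] (v : ι → ℝ) (i : ι) :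
    |v i| ≤ ‖Matrix.diagonal v‖ := by
  have h := Matrix.l2_opNorm_mulVec (Matrix.diagonal v) (EuclideanSpace.single i (1 : ℝ))
  have h1 : (EuclideanSpace.equiv ι ℝ).symm ((Matrix.diagonal v).mulVec
      (EuclideanSpace.single i (1 : ℝ))) = EuclideanSpace.single i (v i) := by
    apply (EuclideanSpace.equiv ι ℝ).injective
    funext j
    simp [Matrix.mulVec_diagonal, EuclideanSpace.single_apply]
  rw [h1, EuclideanSpace.norm_single, EuclideanSpace.norm_single] at h
  simpa [Real.norm_eq_abs] using h

lemma l2_norm_diagonal_eq {ι : Type*} [Fintype ι] [DecidableEq ι] (v : ι → ℝ) (i : ι)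
    (h : ∀ j, |v j| ≤ |v i|) : ‖Matrix.diagonal v‖ = |v i| :=
  le_antisymm (l2_norm_diagonal_le v (abs_nonneg _) h) (l2_norm_diagonal_ge v i)

lemma mu_cyl (p : ℝ) (hp0 : 0 ≤ p) (hp1 : p ≤ 1) {n : ℕ} (hn : 1 ≤ n) (J : Fin n → Fin 2) :
    (((ENNReal.ofReal p • Measure.dirac (fun _ => (0 : Fin 2)) +
        ENNReal.ofReal (1 - p) • Measure.dirac (fun _ => (1 : Fin 2))) : Measure (ℕ → Fin 2))
        (cyl J)).toReal =
      (if J = (fun _ => 0) then p else 0) + (if J = (fun _ => 1) then 1 - p else 0) := by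
  classical
  have hms := measurableSet_cyl J
  have hne : ((fun _ => 0) : Fin n → Fin 2) ≠ (fun _ => 1) := by
    intro h
    have := congrFun h ⟨0, hn⟩
    simp at this
  rw [Measure.add_apply, Measure.smul_apply, Measure.smul_apply,
    Measure.dirac_apply' _ hms, Measure.dirac_apply' _ hms,
    Set.indicator_apply, Set.indicator_apply]
  simp only [mem_cyl_const, Pi.one_apply, smul_eq_mul]
  by_cases h0 : J = fun _ => 0
  · have h1 : J ≠ fun _ => 1 := h0 ▸ hne
    rw [if_pos h0, if_neg h1, if_pos h0, if_neg h1]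
    simp [ENNReal.toReal_ofReal hp0]
  · rw [if_neg h0, if_neg h0]
    by_cases h1 : J = fun _ => 1
    · rw [if_pos h1, if_pos h1]
      simp [ENNReal.toReal_ofReal (by linarith : (0:ℝ) ≤ 1 - p)]
    · rw [if_neg h1, if_neg h1]
      simp

lemma lyap_eval {m : Type*} [Fintype m] [DecidableEq m] (N : Fin 2 → Matrix m m ℝ)
    (p : ℝ) (hp0 : 0 ≤ p) (hp1 : p ≤ 1) (μ : Measure (ℕ → Fin 2))
    (hμ : μ = ENNReal.ofReal p • Measure.dirac (fun _ => 0) +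
      ENNReal.ofReal (1 - p) • Measure.dirac (fun _ => 1))
    {n : ℕ} (hn : 1 ≤ n) :
    lyapSeq N μ n = (((n : ℝ)⁻¹ : ℝ) : EReal) *
      ((p : EReal) * elog ‖N 0 ^ n‖ + ((1 - p : ℝ) : EReal) * elog ‖N 1 ^ n‖) := by
  have hne : ((fun _ => 0) : Fin n → Fin 2) ≠ (fun _ => 1) := by
    intro h
    have := congrFun h ⟨0, hn⟩
    simp at this
  unfold lyapSeq
  congr 1
  have hterm : ∀ J : Fin n → Fin 2,
      (((μ (cyl J)).toReal : ℝ) : EReal) * elog ‖wordProd N J‖ =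
      (if J = (fun _ => 0) then (p : EReal) * elog ‖wordProd N J‖ else 0) +
      (if J = (fun _ => 1) then ((1 - p : ℝ) : EReal) * elog ‖wordProd N J‖ else 0) := by
    intro J
    rw [hμ, mu_cyl p hp0 hp1 hn J]
    by_cases h0 : J = fun _ => 0
    · have h1 : J ≠ fun _ => 1 := h0 ▸ hne
      rw [if_pos h0, if_neg h1, if_pos h0, if_neg h1]
      simp
    · rw [if_neg h0, if_neg h0]
      by_cases h1 : J = fun _ => 1
      · rw [if_pos h1, if_pos h1]; simp
      · rw [if_neg h1, if_neg h1]; simp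
  rw [Finset.sum_congr rfl fun J _ => hterm J, Finset.sum_add_distrib,
    Finset.sum_ite_eq' Finset.univ, Finset.sum_ite_eq' Finset.univ]
  simp [wordProd_const]

lemma elog_pow (x : ℝ) (hx : 0 < x) (n : ℕ) :
    elog (x ^ n) = ((n * Real.log x : ℝ) : EReal) := by
  rw [elog_pos (pow_pos hx n), Real.log_pow]

lemma norm_diag_fin2_pow (a b : ℝ) (h0 : 0 ≤ a) (hab : a ≤ b) (n : ℕ) :
    ‖Matrix.diagonal ![a, b] ^ n‖ = b ^ n := by
  rw [Matrix.diagonal_pow, l2_norm_diagonal_eq _ 1]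
  · simp [abs_of_nonneg (pow_nonneg (h0.trans hab) n)]
  · intro j
    fin_cases j <;>
      simp [Pi.pow_apply, abs_of_nonneg (pow_nonneg h0 n),
        abs_of_nonneg (pow_nonneg (h0.trans hab) n)]
    exact pow_le_pow_left₀ h0 hab n

lemma norm_diag_fin2_pow' (a b : ℝ) (h0 : 0 ≤ b) (hab : b ≤ a) (n : ℕ) :
    ‖Matrix.diagonal ![a, b] ^ n‖ = a ^ n := by
  rw [Matrix.diagonal_pow, l2_norm_diagonal_eq _ 0]
  · simp [abs_of_nonneg (pow_nonneg (h0.trans hab) n)]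
  · intro j
    fin_cases j <;>
      simp [Pi.pow_apply, abs_of_nonneg (pow_nonneg h0 n),
        abs_of_nonneg (pow_nonneg (h0.trans hab) n)]
    exact pow_le_pow_left₀ h0 hab n

lemma norm_diag_fin1_pow (c : ℝ) (hc : 0 ≤ c) (n : ℕ) :
    ‖Matrix.diagonal (fun _ : Fin 1 => c) ^ n‖ = c ^ n := by
  rw [Matrix.diagonal_pow, l2_norm_diagonal_eq _ 0 (fun j => by rw [Fin.eq_zero j])]
  simp [abs_of_nonneg (pow_nonneg hc n)]


/-- Remark 1.8: the equality `M_*(μ) = max{A_*^{(j)}(μ)}` can fail for non-ergodic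
invariant measures. For `M₁ = diag(1,2)`, `M₂ = diag(3,2)` and
`μ = p δ_{1^∞} + (1-p) δ_{2^∞}` with `0 < p < 1`, one has
`M_*(μ) = p log 2 + (1-p) log 3`, `A_*^{(1)}(μ) = (1-p) log 3`,
`A_*^{(2)}(μ) = log 2`, and `M_*(μ) > max{A_*^{(1)}(μ), A_*^{(2)}(μ)}`. -/
theorem nonergodic_counterexample (p : ℝ) (hp0 : 0 < p) (hp1 : p < 1)
    (M : Fin 2 → Matrix (Fin 2) (Fin 2) ℝ)
    (hM : M = ![Matrix.diagonal ![1, 2], Matrix.diagonal ![3, 2]])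
    (A1 A2 : Fin 2 → Matrix (Fin 1) (Fin 1) ℝ)
    (hA1 : A1 = fun i => Matrix.of fun _ _ => M i 0 0)
    (hA2 : A2 = fun i => Matrix.of fun _ _ => M i 1 1)
    (μ : Measure (ℕ → Fin 2))
    (hμ : μ = ENNReal.ofReal p • Measure.dirac (fun _ => 0) +
      ENNReal.ofReal (1 - p) • Measure.dirac (fun _ => 1)) :
    Tendsto (lyapSeq M μ) atTop
      (nhds ((p * Real.log 2 + (1 - p) * Real.log 3 : ℝ) : EReal)) ∧
    Tendsto (lyapSeq A1 μ) atTop (nhds (((1 - p) * Real.log 3 : ℝ) : EReal)) ∧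
    Tendsto (lyapSeq A2 μ) atTop (nhds ((Real.log 2 : ℝ) : EReal)) ∧
    max ((1 - p) * Real.log 3) (Real.log 2) <
      p * Real.log 2 + (1 - p) * Real.log 3 := by
  
  have hM00 : M 0 0 0 = 1 := by rw [hM]; simp
  have hM10 : M 1 0 0 = 3 := by rw [hM]; simp
  have hM01 : M 0 1 1 = 2 := by rw [hM]; simp
  have hM11 : M 1 1 1 = 2 := by rw [hM]; simp
  have hA1d : A1 = fun i => Matrix.diagonal (fun _ : Fin 1 => M i 0 0) := by
    rw [hA1]; funext i; ext a b; fin_cases a <;> fin_cases b <;> simp [Matrix.diagonal]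
  have hA2d : A2 = fun i => Matrix.diagonal (fun _ : Fin 1 => M i 1 1) := by
    rw [hA2]; funext i; ext a b; fin_cases a <;> fin_cases b <;> simp [Matrix.diagonal]
  have hM0 : ∀ n : ℕ, ‖M 0 ^ n‖ = 2 ^ n := fun n => by
    rw [hM, Matrix.cons_val_zero]
    exact norm_diag_fin2_pow 1 2 (by norm_num) (by norm_num) n
  have hM1 : ∀ n : ℕ, ‖M 1 ^ n‖ = 3 ^ n := fun n => by
    rw [hM, Matrix.cons_val_one, Matrix.cons_val_zero]
    exact norm_diag_fin2_pow' 3 2 (by norm_num) (by norm_num) n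
  have hA1n0 : ∀ n : ℕ, ‖A1 0 ^ n‖ = 1 ^ n := fun n => by
    rw [hA1d]
    show ‖Matrix.diagonal (fun _ : Fin 1 => M 0 0 0) ^ n‖ = _
    rw [hM00]; exact norm_diag_fin1_pow 1 (by norm_num) n
  have hA1n1 : ∀ n : ℕ, ‖A1 1 ^ n‖ = 3 ^ n := fun n => by
    rw [hA1d]
    show ‖Matrix.diagonal (fun _ : Fin 1 => M 1 0 0) ^ n‖ = _
    rw [hM10]; exact norm_diag_fin1_pow 3 (by norm_num) n
  have hA2n0 : ∀ n : ℕ, ‖A2 0 ^ n‖ = 2 ^ n := fun n => by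
    rw [hA2d]
    show ‖Matrix.diagonal (fun _ : Fin 1 => M 0 1 1) ^ n‖ = _
    rw [hM01]; exact norm_diag_fin1_pow 2 (by norm_num) n
  have hA2n1 : ∀ n : ℕ, ‖A2 1 ^ n‖ = 2 ^ n := fun n => by
    rw [hA2d]
    show ‖Matrix.diagonal (fun _ : Fin 1 => M 1 1 1) ^ n‖ = _
    rw [hM11]; exact norm_diag_fin1_pow 2 (by norm_num) n
  refine ⟨?_, ?_, ?_, ?_⟩
  · refine Tendsto.congr' ?_ tendsto_const_nhds
    filter_upwards [eventually_ge_atTop 1] with n hn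
    have hn' : (n : ℝ) ≠ 0 := Nat.cast_ne_zero.2 (by omega)
    rw [lyap_eval M p hp0.le hp1.le μ hμ hn, hM0 n, hM1 n,
      elog_pow 2 (by norm_num) n, elog_pow 3 (by norm_num) n]
    norm_cast
    field_simp
  · refine Tendsto.congr' ?_ tendsto_const_nhds
    filter_upwards [eventually_ge_atTop 1] with n hn
    have hn' : (n : ℝ) ≠ 0 := Nat.cast_ne_zero.2 (by omega)
    rw [lyap_eval A1 p hp0.le hp1.le μ hμ hn, hA1n0 n, hA1n1 n,
      elog_pow 1 (by norm_num) n, elog_pow 3 (by norm_num) n]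
    norm_cast
    rw [Real.log_one]
    field_simp
    ring
  · refine Tendsto.congr' ?_ tendsto_const_nhds
    filter_upwards [eventually_ge_atTop 1] with n hn
    have hn' : (n : ℝ) ≠ 0 := Nat.cast_ne_zero.2 (by omega)
    rw [lyap_eval A2 p hp0.le hp1.le μ hμ hn, hA2n0 n, hA2n1 n,
      elog_pow 2 (by norm_num) n]
    norm_cast
    field_simp
    ring
  · have l2 : 0 < Real.log 2 := Real.log_pos (by norm_num)
    have l23 : Real.log 2 < Real.log 3 := Real.log_lt_log (by norm_num) (by norm_num)
    refine max_lt ?_ ?_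
    · nlinarith
    · nlinarith [mul_lt_mul_of_pos_left l23 (by linarith : (0:ℝ) < 1 - p)]
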